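/- Let A ∈ ℝ^{n×n}, B ∈ ℝ^{n×q}, and let M := [[−(A+A^T), B],[B^T, 0]] be the associated saddle-point matrix. There exists a matrix K ∈ ℝ^{q×n} such that (A−BK)+(A−BK)^T is negative definite if and only if there exist a symmetric positive definite matrix D ∈ ℝ^{(n+q)×(n+q)}, a matrix Z ∈ ℝ^{(n+q)×n} with Z^T D Z = I_n, and a diagonal positive definite matrix Λ ∈ ℝ^{n×n} such that M Z = D Z Λ (i.e. the pencil (M, D) admits n positive eigenvalues with D-orthonormal eigenvectors). -/

import Mathlib

open Matrix

set_option linter.unusedSectionVars false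

section helpers

variable {m l : Type*} [Fintype m] [Fintype l] [DecidableEq m] [DecidableEq l]

lemma posDef_conj (N : Matrix m m ℝ) (hN : N.PosDef) (G : Matrix m l ℝ)
    (hG : ∀ v, G *ᵥ v = 0 → v = 0) : (Gᵀ * N * G).PosDef := by
  have hNt : Nᵀ = N := by
    rw [← conjTranspose_eq_transpose_of_trivial]; exact hN.isHermitian.eq
  refine posDef_iff_dotProduct_mulVec.mpr ⟨?_, ?_⟩
  · have h1 : (Gᵀ * N * G)ᴴ = Gᵀ * N * G := by
      simp [conjTranspose_mul, Matrix.mul_assoc, hNt]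
    exact h1
  · intro x hx
    have hGx : G *ᵥ x ≠ 0 := fun h => hx (hG x h)
    have := hN.dotProduct_mulVec_pos hGx
    simpa [star_trivial, ← mulVec_mulVec, dotProduct_mulVec, vecMul_transpose] using this

lemma dot_sum_elim (x : m ⊕ l → ℝ) (a : m → ℝ) (b : l → ℝ) :
    x ⬝ᵥ Sum.elim a b = (x ∘ Sum.inl) ⬝ᵥ a + (x ∘ Sum.inr) ⬝ᵥ b := by
  simp [dotProduct, Fintype.sum_sum_type]

lemma posDef_blockDiag (P : Matrix m m ℝ) (C : Matrix l l ℝ) (hP : P.PosDef) (hC : C.PosDef) :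
    (fromBlocks P 0 0 C).PosDef := by
  refine posDef_iff_dotProduct_mulVec.mpr ⟨?_, ?_⟩
  · have h1 := hP.isHermitian.eq
    have h2 := hC.isHermitian.eq
    show (fromBlocks P 0 0 C)ᴴ = _
    have h1' : Pᵀ = P := by rw [← conjTranspose_eq_transpose_of_trivial]; exact h1
    have h2' : Cᵀ = C := by rw [← conjTranspose_eq_transpose_of_trivial]; exact h2
    rw [fromBlocks_conjTranspose]
    simp [h1, h2, h1', h2']
  · intro x hx
    have hx' : x ∘ Sum.inl ≠ 0 ∨ x ∘ Sum.inr ≠ 0 := by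
      by_contra h
      push_neg at h
      apply hx
      ext (i | i)
      · exact congrFun h.1 i
      · exact congrFun h.2 i
    have hxe : x = Sum.elim (x ∘ Sum.inl) (x ∘ Sum.inr) := by ext (i | i) <;> rfl
    rw [fromBlocks_mulVec]
    simp only [star_trivial, zero_mulVec, add_zero, zero_add]
    rw [dot_sum_elim]
    rcases hx' with h | h
    · have := hP.dotProduct_mulVec_pos h
      have h2 := hC.posSemidef.dotProduct_mulVec_nonneg (x ∘ Sum.inr)
      simp only [star_trivial] at this h2
      linarith
    · have := hC.dotProduct_mulVec_pos h
      have h2 := hP.posSemidef.dotProduct_mulVec_nonneg (x ∘ Sum.inl)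
      simp only [star_trivial] at this h2
      linarith

lemma upper_inj (X : Matrix m l ℝ) (w : m ⊕ l → ℝ) (h : (fromBlocks (1 : Matrix m m ℝ) X 0 (1 : Matrix l l ℝ)) *ᵥ w = 0) : w = 0 := by
  rw [fromBlocks_mulVec] at h
  have h2 : w ∘ Sum.inr = 0 := by
    have := congrFun h
    have h2' : ∀ i, w (Sum.inr i) = 0 := fun i => by simpa using this (Sum.inr i)
    ext i; exact h2' i
  have h1 : ∀ i, w (Sum.inl i) = 0 := by
    intro i
    have := congrFun h (Sum.inl i)
    simp [h2] at this
    exact this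
  ext (i | i)
  · exact h1 i
  · exact congrFun h2 i

lemma lower_inj (X : Matrix l m ℝ) (w : m ⊕ l → ℝ) (h : (fromBlocks (1 : Matrix m m ℝ) 0 X (1 : Matrix l l ℝ)) *ᵥ w = 0) : w = 0 := by
  rw [fromBlocks_mulVec] at h
  have h1 : w ∘ Sum.inl = 0 := by
    ext i
    have := congrFun h (Sum.inl i)
    simpa using this
  ext (i | i)
  · exact congrFun h1 i
  · have := congrFun h (Sum.inr i)
    simp [h1] at this
    exact this

end helpers


lemma dotProduct_self_nonneg' {k : Type*} [Fintype k] (v : k → ℝ) : 0 ≤ v ⬝ᵥ v :=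
  Finset.sum_nonneg fun i _ => mul_self_nonneg (v i)

lemma finsler {nn qq : ℕ} (Q : Matrix (Fin nn) (Fin nn) ℝ) (B : Matrix (Fin nn) (Fin qq) ℝ)
    (h : ∀ x : Fin nn → ℝ, x ≠ 0 → Bᵀ *ᵥ x = 0 → 0 < x ⬝ᵥ Q *ᵥ x) :
    ∃ c : ℝ, 0 < c ∧ ∀ x : Fin nn → ℝ, x ≠ 0 →
      0 < x ⬝ᵥ Q *ᵥ x + c * ((Bᵀ *ᵥ x) ⬝ᵥ (Bᵀ *ᵥ x)) := by
  set g : (Fin nn → ℝ) → ℝ := fun x => x ⬝ᵥ Q *ᵥ x with hgdef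
  set f : (Fin nn → ℝ) → ℝ := fun x => (Bᵀ *ᵥ x) ⬝ᵥ (Bᵀ *ᵥ x) with hfdef
  have hg : Continuous g :=
    continuous_id.dotProduct (continuous_const.matrix_mulVec continuous_id)
  have hf : Continuous f := by
    have hb : Continuous fun x : Fin nn → ℝ => Bᵀ *ᵥ x :=
      continuous_const.matrix_mulVec continuous_id
    exact hb.dotProduct hb
  have hf0 : ∀ x, 0 ≤ f x := fun x => dotProduct_self_nonneg' _
  have key : ∃ c : ℝ, 0 < c ∧ ∀ x ∈ Metric.sphere (0 : Fin nn → ℝ) 1, 0 < g x + c * f x := by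
    have hS : IsCompact (Metric.sphere (0 : Fin nn → ℝ) 1) := isCompact_sphere 0 1
    have hK₀c : IsCompact (Metric.sphere (0 : Fin nn → ℝ) 1 ∩ {x | g x ≤ 0}) :=
      hS.inter_right (isClosed_le hg continuous_const)
    by_cases hK : (Metric.sphere (0 : Fin nn → ℝ) 1 ∩ {x | g x ≤ 0}).Nonempty
    · obtain ⟨xm, hxmK, hxmmin⟩ := hK₀c.exists_isMinOn hK hf.continuousOn
      have hxmS : xm ∈ Metric.sphere (0 : Fin nn → ℝ) 1 := hxmK.1
      have hxm0 : xm ≠ 0 := by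
        intro h0
        rw [mem_sphere_zero_iff_norm, h0, norm_zero] at hxmS
        norm_num at hxmS
      have hδ : 0 < f xm := by
        rcases lt_or_eq_of_le (hf0 xm) with h' | h'
        · exact h'
        · exfalso
          have hB0 : Bᵀ *ᵥ xm = 0 := by
            have := h'.symm
            rwa [hfdef, dotProduct_self_eq_zero] at this
          have := h xm hxm0 hB0
          have hle : g xm ≤ 0 := hxmK.2
          linarith
      obtain ⟨x₁, hx₁, hmin⟩ := hS.exists_isMinOn ⟨xm, hxmS⟩ hg.continuousOn
      refine ⟨(|g x₁| + 1) / f xm, div_pos (by positivity) hδ, ?_⟩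
      intro x hxS
      rcases le_or_gt (g x) 0 with hgx | hgx
      · have hxK : x ∈ Metric.sphere (0 : Fin nn → ℝ) 1 ∩ {x | g x ≤ 0} := ⟨hxS, hgx⟩
        have h1 : f xm ≤ f x := hxmmin hxK
        have h2 : g x₁ ≤ g x := hmin hxS
        have h3 : (|g x₁| + 1) / f xm * f xm = |g x₁| + 1 := div_mul_cancel₀ _ hδ.ne'
        have h4 : (|g x₁| + 1) / f xm * f xm ≤ (|g x₁| + 1) / f xm * f x :=
          mul_le_mul_of_nonneg_left h1 (le_of_lt (div_pos (by positivity) hδ))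
        have h5 : -|g x₁| ≤ g x₁ := neg_abs_le _
        linarith
      · have : 0 ≤ (|g x₁| + 1) / f xm * f x :=
          mul_nonneg (le_of_lt (div_pos (by positivity) hδ)) (hf0 x)
        linarith
    · refine ⟨1, one_pos, fun x hxS => ?_⟩
      have : x ∉ Metric.sphere (0 : Fin nn → ℝ) 1 ∩ {x | g x ≤ 0} :=
        fun hx => hK ⟨x, hx⟩
      have hgx : 0 < g x := by
        by_contra hle
        exact this ⟨hxS, by push_neg at hle; exact hle⟩
      have := hf0 x
      linarith
  obtain ⟨c, hc, hcs⟩ := key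
  refine ⟨c, hc, fun x hx => ?_⟩
  have hxn : (0 : ℝ) < ‖x‖ := norm_pos_iff.mpr hx
  set t : ℝ := ‖x‖⁻¹ with htdef
  have ht : 0 < t := inv_pos.mpr hxn
  have hu : t • x ∈ Metric.sphere (0 : Fin nn → ℝ) 1 := by
    rw [mem_sphere_zero_iff_norm, norm_smul, htdef]
    simp [abs_of_pos (inv_pos.mpr hxn), inv_mul_cancel₀ hxn.ne']
  have hpos := hcs (t • x) hu
  have heqg : g (t • x) = t * t * g x := by
    simp only [hgdef, mulVec_smul, smul_dotProduct, dotProduct_smul, smul_eq_mul]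
    ring
  have heqf : f (t • x) = t * t * f x := by
    simp only [hfdef, mulVec_smul, smul_dotProduct, dotProduct_smul, smul_eq_mul]
    ring
  rw [heqg, heqf] at hpos
  nlinarith [mul_pos ht ht]


lemma dot_sum_elim' {m l : Type*} [Fintype m] [Fintype l] (x : m ⊕ l → ℝ) (a : m → ℝ) (b : l → ℝ) :
    x ⬝ᵥ Sum.elim a b = (x ∘ Sum.inl) ⬝ᵥ a + (x ∘ Sum.inr) ⬝ᵥ b := by
  simp [dotProduct, Fintype.sum_sum_type]

lemma kernel_pos {nn qq : ℕ} (Q : Matrix (Fin nn) (Fin nn) ℝ) (B : Matrix (Fin nn) (Fin qq) ℝ)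
    (D : Matrix (Fin nn ⊕ Fin qq) (Fin nn ⊕ Fin qq) ℝ)
    (Z : Matrix (Fin nn ⊕ Fin qq) (Fin nn) ℝ) (d : Fin nn → ℝ) (hd : ∀ i, 0 < d i)
    (hZDZ : Zᵀ * D * Z = 1)
    (hMZ : fromBlocks Q B Bᵀ 0 * Z = D * Z * diagonal d) :
    ∀ x : Fin nn → ℝ, x ≠ 0 → Bᵀ *ᵥ x = 0 → 0 < x ⬝ᵥ Q *ᵥ x := by
  intro x hx hBx
  by_contra hcon
  push_neg at hcon
  set M : Matrix (Fin nn ⊕ Fin qq) (Fin nn ⊕ Fin qq) ℝ := fromBlocks Q B Bᵀ 0 with hMdef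
  have hZMZ : Zᵀ * M * Z = diagonal d := by
    rw [Matrix.mul_assoc, hMZ, ← Matrix.mul_assoc, ← Matrix.mul_assoc, hZDZ, Matrix.one_mul]
  -- Z is injective
  have hker : ∀ c : Fin nn → ℝ, Z *ᵥ c = 0 → c = 0 := by
    intro c hc
    have h1 : (Zᵀ * D * Z) *ᵥ c = 0 := by
      rw [← mulVec_mulVec, ← mulVec_mulVec, hc, mulVec_zero, mulVec_zero]
    rwa [hZDZ, one_mulVec] at h1
  have hZinj : Function.Injective Z.mulVecLin := by
    rw [injective_iff_map_eq_zero]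
    intro c hc
    exact hker c (by simpa [mulVecLin_apply] using hc)
  set V : Submodule ℝ (Fin nn ⊕ Fin qq → ℝ) := LinearMap.range Z.mulVecLin with hVdef
  have hVrank : Module.finrank ℝ V = nn := by
    rw [hVdef, LinearMap.finrank_range_of_inj hZinj]
    simp
  have hVpos : ∀ v ∈ V, v ≠ 0 → 0 < v ⬝ᵥ M *ᵥ v := by
    rintro v ⟨c, rfl⟩ hv
    have hc0 : c ≠ 0 := by rintro rfl; simp at hv
    have hrw : Z.mulVecLin c ⬝ᵥ M *ᵥ Z.mulVecLin c = c ⬝ᵥ (Zᵀ * M * Z) *ᵥ c := by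
      simp only [mulVecLin_apply, ← mulVec_mulVec, dotProduct_mulVec, vecMul_transpose]
    rw [hrw, hZMZ]
    have := (Matrix.PosDef.diagonal hd).dotProduct_mulVec_pos hc0
    simpa using this
  -- the bad subspace
  set e : Fin nn ⊕ Fin qq → ℝ := Sum.elim x 0 with hedef
  have he0 : e ≠ 0 := by
    intro h0
    apply hx
    ext i
    exact congrFun h0 (Sum.inl i)
  set J : Matrix (Fin nn ⊕ Fin qq) (Fin qq) ℝ :=
    fromRows (0 : Matrix (Fin nn) (Fin qq) ℝ) (1 : Matrix (Fin qq) (Fin qq) ℝ) with hJdef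
  have hJv : ∀ y : Fin qq → ℝ, J *ᵥ y = Sum.elim (0 : Fin nn → ℝ) y := by
    intro y
    rw [hJdef, fromRows_mulVec]
    simp
  have hJinj : Function.Injective J.mulVecLin := by
    rw [injective_iff_map_eq_zero]
    intro y hy
    rw [mulVecLin_apply, hJv] at hy
    ext i
    exact congrFun hy (Sum.inr i)
  set Wq : Submodule ℝ (Fin nn ⊕ Fin qq → ℝ) := LinearMap.range J.mulVecLin with hWqdef
  have hWqrank : Module.finrank ℝ Wq = qq := by
    rw [hWqdef, LinearMap.finrank_range_of_inj hJinj]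
    simp
  set espan : Submodule ℝ (Fin nn ⊕ Fin qq → ℝ) := Submodule.span ℝ {e} with hespdef
  have hinf2 : espan ⊓ Wq = ⊥ := by
    rw [Submodule.eq_bot_iff]
    rintro w ⟨hw1, hw2⟩
    obtain ⟨t, rfl⟩ := Submodule.mem_span_singleton.mp hw1
    obtain ⟨y, hy⟩ := hw2
    rw [mulVecLin_apply, hJv] at hy
    have ht : t = 0 := by
      by_contra ht0
      apply hx
      ext i
      have := congrFun hy (Sum.inl i)
      simp [hedef] at this
      rcases this with h | h
      · exact absurd h ht0
      · exact h
    simp [ht]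
  set W : Submodule ℝ (Fin nn ⊕ Fin qq → ℝ) := espan ⊔ Wq with hWdef
  have hWrank : Module.finrank ℝ W = 1 + qq := by
    have := Submodule.finrank_sup_add_finrank_inf_eq espan Wq
    rw [hinf2] at this
    simp only [finrank_bot, add_zero] at this
    rw [hWdef, this, finrank_span_singleton he0, hWqrank]
  have hWnonpos : ∀ w ∈ W, w ⬝ᵥ M *ᵥ w ≤ 0 := by
    intro w hw
    rw [hWdef, Submodule.mem_sup] at hw
    obtain ⟨a, ha, b, hb, rfl⟩ := hw
    obtain ⟨t, rfl⟩ := Submodule.mem_span_singleton.mp ha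
    obtain ⟨y, rfl⟩ := hb
    rw [mulVecLin_apply, hJv]
    have hMe : M *ᵥ e = Sum.elim (Q *ᵥ x) (0 : Fin qq → ℝ) := by
      rw [hMdef, hedef, fromBlocks_mulVec]
      simp [hBx]
    have hMu : M *ᵥ Sum.elim (0 : Fin nn → ℝ) y = Sum.elim (B *ᵥ y) (0 : Fin qq → ℝ) := by
      rw [hMdef, fromBlocks_mulVec]
      simp
    have hedot1 : e ⬝ᵥ Sum.elim (Q *ᵥ x) (0 : Fin qq → ℝ) = x ⬝ᵥ Q *ᵥ x := by
      rw [dot_sum_elim']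
      simp [hedef]
    have hedot2 : e ⬝ᵥ Sum.elim (B *ᵥ y) (0 : Fin qq → ℝ) = 0 := by
      rw [dot_sum_elim']
      simp only [hedef, Sum.elim_comp_inl, Sum.elim_comp_inr, dotProduct_zero, add_zero]
      rw [dotProduct_mulVec, ← mulVec_transpose, hBx]
      simp
    have hudot1 : Sum.elim (0 : Fin nn → ℝ) y ⬝ᵥ Sum.elim (Q *ᵥ x) (0 : Fin qq → ℝ) = 0 := by
      rw [dot_sum_elim']
      simp
    have hudot2 : Sum.elim (0 : Fin nn → ℝ) y ⬝ᵥ Sum.elim (B *ᵥ y) (0 : Fin qq → ℝ) = 0 := by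
      rw [dot_sum_elim']
      simp
    rw [mulVec_add, mulVec_smul, hMe, hMu]
    rw [dotProduct_add, add_dotProduct, add_dotProduct, dotProduct_smul, smul_dotProduct,
      smul_dotProduct, dotProduct_smul]
    rw [hedot1, hedot2, hudot1, hudot2]
    simp only [smul_eq_mul, mul_zero, add_zero, zero_add]
    have : t * (t * (x ⬝ᵥ Q *ᵥ x)) = (t * t) * (x ⬝ᵥ Q *ᵥ x) := by ring
    rw [this]
    exact mul_nonpos_of_nonneg_of_nonpos (mul_self_nonneg t) hcon
  have hdisjVW : V ⊓ W = ⊥ := by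
    rw [Submodule.eq_bot_iff]
    rintro v ⟨hv1, hv2⟩
    by_contra hv0
    have h1 := hVpos v hv1 hv0
    have h2 := hWnonpos v hv2
    linarith
  have hsum := Submodule.finrank_sup_add_finrank_inf_eq V W
  rw [hdisjVW] at hsum
  simp only [finrank_bot, add_zero] at hsum
  have hle : Module.finrank ℝ (V ⊔ W : Submodule ℝ (Fin nn ⊕ Fin qq → ℝ)) ≤ nn + qq := by
    have := Submodule.finrank_le (V ⊔ W : Submodule ℝ (Fin nn ⊕ Fin qq → ℝ))
    simpa using this
  rw [hVrank, hWrank] at hsum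
  omega

lemma forward_construction {nn qq : ℕ} (Q P : Matrix (Fin nn) (Fin nn) ℝ)
    (B : Matrix (Fin nn) (Fin qq) ℝ) (K : Matrix (Fin qq) (Fin nn) ℝ)
    (X : Matrix (Fin nn) (Fin qq) ℝ) (Z₁ : Matrix (Fin nn) (Fin nn) ℝ)
    (hP : P.PosDef) (hPexp : P = Q + B * K + Kᵀ * Bᵀ) (hPX : P * X = B)
    (hZ₁ : Z₁ᵀ * P * Z₁ = 1) :
    ∃ D : Matrix (Fin nn ⊕ Fin qq) (Fin nn ⊕ Fin qq) ℝ, D.PosDef ∧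
      ∃ (Z : Matrix (Fin nn ⊕ Fin qq) (Fin nn) ℝ) (d : Fin nn → ℝ),
        (∀ i, 0 < d i) ∧ Zᵀ * D * Z = 1 ∧
        fromBlocks Q B Bᵀ 0 * Z = D * Z * diagonal d := by
  have hPsymm : Pᵀ = P := by
    rw [← conjTranspose_eq_transpose_of_trivial]
    exact hP.isHermitian.eq
  have hXtP : Xᵀ * P = Bᵀ := by
    rw [← hPX, transpose_mul, hPsymm]
  set U : Matrix (Fin nn ⊕ Fin qq) (Fin nn ⊕ Fin qq) ℝ := fromBlocks 1 X 0 1 with hUdef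
  set Tv : Matrix (Fin nn ⊕ Fin qq) (Fin nn ⊕ Fin qq) ℝ := fromBlocks 1 0 (-K) 1 with hTdef
  set N : Matrix (Fin nn ⊕ Fin qq) (Fin nn ⊕ Fin qq) ℝ := fromBlocks P 0 0 1 with hNdef
  have hN : N.PosDef := posDef_blockDiag P 1 hP Matrix.PosDef.one
  have hGinj : ∀ v, (U * Tv) *ᵥ v = 0 → v = 0 := by
    intro v hv
    rw [← mulVec_mulVec] at hv
    exact lower_inj (-K) v (upper_inj X _ hv)
  set Z : Matrix (Fin nn ⊕ Fin qq) (Fin nn) ℝ := fromRows Z₁ (K * Z₁) with hZdef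
  have hGZ : (U * Tv) * Z = fromRows Z₁ 0 := by
    rw [hZdef, Matrix.mul_assoc, hTdef, fromBlocks_mul_fromRows, hUdef,
      fromBlocks_mul_fromRows]
    simp [Matrix.neg_mul]
  have hNZ : N * fromRows Z₁ (0 : Matrix (Fin qq) (Fin nn) ℝ) = fromRows (P * Z₁) (0 : Matrix (Fin qq) (Fin nn) ℝ) := by
    rw [hNdef, fromBlocks_mul_fromRows]
    simp
  refine ⟨(U * Tv)ᵀ * N * (U * Tv), posDef_conj N hN (U * Tv) hGinj, Z, fun _ => 1,
    fun _ => one_pos, ?_, ?_⟩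
  · have h1 : Zᵀ * ((U * Tv)ᵀ * N * (U * Tv)) * Z = ((U * Tv) * Z)ᵀ * N * ((U * Tv) * Z) := by
      simp only [transpose_mul, Matrix.mul_assoc]
    rw [h1, hGZ, Matrix.mul_assoc, hNZ, transpose_fromRows, fromCols_mul_fromRows,
      ← Matrix.mul_assoc, hZ₁]
    simp only [transpose_zero, Matrix.zero_mul, add_zero]
  · have hd1 : diagonal (fun _ : Fin nn => (1 : ℝ)) = 1 := diagonal_one
    rw [hd1, Matrix.mul_one]
    have h2 : ((U * Tv)ᵀ * N * (U * Tv)) * Z = (U * Tv)ᵀ * (N * ((U * Tv) * Z)) := by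
      simp only [Matrix.mul_assoc]
    rw [h2, hGZ, hNZ, transpose_mul, hTdef, hUdef, fromBlocks_transpose, fromBlocks_transpose,
      Matrix.mul_assoc, fromBlocks_mul_fromRows, fromBlocks_mul_fromRows,
      fromBlocks_mul_fromRows]
    rw [fromRows_ext_iff]
    constructor
    · simp only [transpose_one, transpose_zero, Matrix.one_mul, Matrix.zero_mul,
        Matrix.mul_zero, add_zero, zero_add, transpose_neg, Matrix.neg_mul]
      rw [← Matrix.mul_assoc Xᵀ P Z₁, hXtP, hPexp]
      simp only [Matrix.add_mul, Matrix.mul_assoc, Matrix.neg_mul]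
      abel
    · simp only [transpose_one, transpose_zero, Matrix.one_mul, Matrix.zero_mul,
        Matrix.mul_zero, add_zero, zero_add]
      rw [← Matrix.mul_assoc Xᵀ P Z₁, hXtP]

section sqrtHelpers

open scoped MatrixOrder

noncomputable def Matrix.PosSemidef.sqrt {k : Type*} [Fintype k] [DecidableEq k]
    {S : Matrix k k ℝ} (_ : S.PosSemidef) : Matrix k k ℝ := CFC.sqrt S

lemma Matrix.PosSemidef.sqrt_mul_self {k : Type*} [Fintype k] [DecidableEq k]
    {S : Matrix k k ℝ} (hS : S.PosSemidef) : hS.sqrt * hS.sqrt = S :=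
  CFC.sqrt_mul_sqrt_self S (nonneg_iff_posSemidef.mpr hS)

lemma Matrix.PosSemidef.posSemidef_sqrt {k : Type*} [Fintype k] [DecidableEq k]
    {S : Matrix k k ℝ} (hS : S.PosSemidef) : hS.sqrt.PosSemidef :=
  nonneg_iff_posSemidef.mp (CFC.sqrt_nonneg S)

end sqrtHelpers

/-- Theorem 3.6 of the paper: a dissipating feedback `K` exists if and
only if the pencil `(M, D)` admits `n` positive eigenvalues (with `D`-orthonormal
eigenvectors) for some symmetric positive definite matrix `D`. -/
theorem dissipating_iff_pencil {n q : ℕ}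
    (A : Matrix (Fin n) (Fin n) ℝ) (B : Matrix (Fin n) (Fin q) ℝ) :
    (∃ K : Matrix (Fin q) (Fin n) ℝ,
        ∀ x : Fin n → ℝ, x ≠ 0 →
          x ⬝ᵥ (((A - B * K) + (A - B * K)ᵀ) *ᵥ x) < 0) ↔
      ∃ D : Matrix (Fin n ⊕ Fin q) (Fin n ⊕ Fin q) ℝ, D.PosDef ∧
        ∃ (Z : Matrix (Fin n ⊕ Fin q) (Fin n) ℝ) (d : Fin n → ℝ),
          (∀ i, 0 < d i) ∧ Zᵀ * D * Z = 1 ∧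
          Matrix.fromBlocks (-(A + Aᵀ)) B Bᵀ 0 * Z = D * Z * Matrix.diagonal d := by
  constructor
  · rintro ⟨K, hK⟩
    set Q : Matrix (Fin n) (Fin n) ℝ := -(A + Aᵀ) with hQdef
    set P : Matrix (Fin n) (Fin n) ℝ := -((A - B * K) + (A - B * K)ᵀ) with hPdef
    have hPsymm : Pᵀ = P := by
      rw [hPdef, transpose_neg, transpose_add, transpose_transpose, add_comm]
    have hP : P.PosDef := by
      refine posDef_iff_dotProduct_mulVec.mpr ⟨?_, ?_⟩
      · show Pᴴ = P
        rw [conjTranspose_eq_transpose_of_trivial, hPsymm]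
      · intro v hv
        have := hK v hv
        rw [hPdef, neg_mulVec, dotProduct_neg]
        simp only [star_trivial]
        linarith
    have hPexp : P = Q + B * K + Kᵀ * Bᵀ := by
      rw [hPdef, hQdef]
      simp only [transpose_sub, transpose_mul]
      abel
    -- square root of P
    have hPsd := hP.posSemidef
    have hRP : hPsd.sqrt * hPsd.sqrt = P := hPsd.sqrt_mul_self
    set R := hPsd.sqrt with hRdef
    have hRsym : Rᵀ = R := by
      rw [← conjTranspose_eq_transpose_of_trivial]
      exact hPsd.posSemidef_sqrt.isHermitian.eq
    have hRunit : IsUnit R.det := by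
      have h1 := hP.det_pos
      rw [← hRP, det_mul] at h1
      exact isUnit_iff_ne_zero.mpr (by nlinarith)
    have hRinv : R⁻¹ * R = 1 := nonsing_inv_mul R hRunit
    have hRinv' : R * R⁻¹ = 1 := mul_nonsing_inv R hRunit
    set Z₁ : Matrix (Fin n) (Fin n) ℝ := R⁻¹ with hZ₁def
    have hZ₁sym : Z₁ᵀ = Z₁ := by rw [hZ₁def, transpose_nonsing_inv, hRsym]
    have hZ₁PZ₁ : Z₁ᵀ * P * Z₁ = 1 := by
      rw [hZ₁sym, hZ₁def, ← hRP,
        show R⁻¹ * (R * R) * R⁻¹ = (R⁻¹ * R) * (R * R⁻¹) from by noncomm_ring,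
        hRinv, hRinv', Matrix.one_mul]
    have hPunit : IsUnit P.det := hP.det_pos.ne'.isUnit
    have hPX : P * (P⁻¹ * B) = B := by
      rw [← Matrix.mul_assoc, mul_nonsing_inv P hPunit, Matrix.one_mul]
    exact forward_construction Q P B K (P⁻¹ * B) Z₁ hP hPexp hPX hZ₁PZ₁
  · rintro ⟨D, hD, Z, d, hd, hZDZ, hMZ⟩
    have hker := kernel_pos (-(A + Aᵀ)) B D Z d hd hZDZ hMZ
    obtain ⟨c, hc, hfin⟩ := finsler (-(A + Aᵀ)) B hker
    refine ⟨(c / 2) • Bᵀ, fun x hx => ?_⟩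
    have hBBt : (B * Bᵀ)ᵀ = B * Bᵀ := by rw [transpose_mul, transpose_transpose]
    have heq : (A - B * ((c / 2) • Bᵀ)) + (A - B * ((c / 2) • Bᵀ))ᵀ =
        -((-(A + Aᵀ)) + c • (B * Bᵀ)) := by
      rw [Matrix.mul_smul, transpose_sub, transpose_smul, hBBt]
      module
    rw [heq, neg_mulVec, dotProduct_neg, neg_lt, neg_zero]
    have hcomp : x ⬝ᵥ ((-(A + Aᵀ) + c • (B * Bᵀ)) *ᵥ x) =
        x ⬝ᵥ (-(A + Aᵀ)) *ᵥ x + c * ((Bᵀ *ᵥ x) ⬝ᵥ (Bᵀ *ᵥ x)) := by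
      rw [add_mulVec, dotProduct_add, smul_mulVec, dotProduct_smul]
      congr 1
      rw [smul_eq_mul]
      congr 1
      rw [← mulVec_mulVec, dotProduct_mulVec, ← mulVec_transpose]
    rw [hcomp]
    exact hfin x hx
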